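/- Fix a linear order σ on E(Q_d). If an edge e of Q_d is good with respect to σ, then e is an edge of the final graph G_M(σ) produced by the Q₂-free process run with order σ. -/

import Mathlib

open scoped Classical

/-- The vertex set of the `d`-dimensional hypercube: `{0,1}^d`. -/
abbrev Vtx (d : ℕ) := Fin d → Bool

/-- The `d`-dimensional hypercube graph `Q_d`: two vertices are adjacent iff
they differ in exactly one coordinate. -/
def cubeGraph (d : ℕ) : SimpleGraph (Vtx d) where
  Adj x y := hammingDist x y = 1
  symm := ⟨by intro x y h; rwa [hammingDist_comm]⟩
  loopless := ⟨by intro x h; simp [hammingDist_self] at h⟩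

/-- `C` is the edge set of a 4-cycle (a copy of `Q₂`) in `Q_d`. -/
def IsFourCycle (d : ℕ) (C : Finset (Sym2 (Vtx d))) : Prop :=
  ∃ a b c e : Vtx d, a ≠ b ∧ a ≠ c ∧ a ≠ e ∧ b ≠ c ∧ b ≠ e ∧ c ≠ e ∧
    (cubeGraph d).Adj a b ∧ (cubeGraph d).Adj b c ∧ (cubeGraph d).Adj c e ∧
    (cubeGraph d).Adj e a ∧ C = {s(a, b), s(b, c), s(c, e), s(e, a)}

/-- The number of edges of `Q_d`. -/
noncomputable def numEdges (d : ℕ) : ℕ := Nat.card ↥(cubeGraph d).edgeSet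

/-- A linear order on `E(Q_d)`, encoded as a bijection onto `Fin (numEdges d)`. -/
abbrev EdgeOrder (d : ℕ) := ↥(cubeGraph d).edgeSet ≃ Fin (numEdges d)

/-- One step of the `Q₂`-free process: add edge `e` to `G` unless doing so creates
a (new) copy of `Q₂`, i.e. a 4-cycle. -/
noncomputable def step (d : ℕ) (G : Finset (Sym2 (Vtx d))) (e : Sym2 (Vtx d)) :
    Finset (Sym2 (Vtx d)) :=
  if ∃ C : Finset (Sym2 (Vtx d)), IsFourCycle d C ∧ C ⊆ insert e G ∧ ¬C ⊆ G then G
  else insert e G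

/-- The final graph `G_M(σ)` of the `Q₂`-free process in `Q_d` run with the edge order `σ`:
consider the edges of `Q_d` in `σ`-order, adding each one unless it creates a copy of `Q₂`. -/
noncomputable def finalGraph (d : ℕ) (σ : EdgeOrder d) : Finset (Sym2 (Vtx d)) :=
  ((List.finRange (numEdges d)).map fun j => ((σ.symm j : ↥(cubeGraph d).edgeSet) : Sym2 (Vtx d))).foldl
    (step d) ∅

/-- An edge `e` of `Q_d` is good w.r.t. the order `σ` if for every 4-cycle of `Q_d`
containing `e`, the `σ`-last of its four edges is not `e`. -/
def Good (d : ℕ) (σ : EdgeOrder d) (e : ↥(cubeGraph d).edgeSet) : Prop :=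
  ∀ C : Finset (Sym2 (Vtx d)), IsFourCycle d C → (e : Sym2 (Vtx d)) ∈ C →
    ∃ f ∈ C, f ≠ (e : Sym2 (Vtx d)) ∧ ∃ hf : f ∈ (cubeGraph d).edgeSet, σ e < σ ⟨f, hf⟩

lemma subset_step (d : ℕ) (G : Finset (Sym2 (Vtx d))) (f : Sym2 (Vtx d)) :
    G ⊆ step d G f := by
  unfold step; split
  · exact Finset.Subset.refl _
  · exact Finset.subset_insert _ _

lemma subset_foldl (d : ℕ) (l : List (Sym2 (Vtx d))) (G : Finset (Sym2 (Vtx d))) :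
    G ⊆ l.foldl (step d) G := by
  induction l generalizing G with
  | nil => exact Finset.Subset.refl _
  | cons a l ih => exact (subset_step d G a).trans (ih _)

lemma mem_foldl (d : ℕ) (l : List (Sym2 (Vtx d))) (G : Finset (Sym2 (Vtx d)))
    (x : Sym2 (Vtx d)) (hx : x ∈ l.foldl (step d) G) : x ∈ G ∨ x ∈ l := by
  induction l generalizing G with
  | nil => exact Or.inl hx
  | cons a l ih =>
    rcases ih _ hx with h | h
    · have : step d G a ⊆ insert a G := by
        unfold step; split
        · exact Finset.subset_insert _ _
        · exact Finset.Subset.refl _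
      rcases Finset.mem_insert.mp (this h) with h | h
      · exact Or.inr (by simp [h])
      · exact Or.inl h
    · exact Or.inr (List.mem_cons_of_mem _ h)

set_option maxHeartbeats 1000000 in
/-- Fix a linear order `σ` on `E(Q_d)`. If an edge `e` of `Q_d` is good with
respect to `σ`, then `e` is an edge of the final graph `G_M(σ)` produced by the `Q₂`-free
process run with the order `σ`. -/
theorem good_mem_finalGraph (d : ℕ) (σ : EdgeOrder d) (e : ↥(cubeGraph d).edgeSet)
    (he : Good d σ e) : (e : Sym2 (Vtx d)) ∈ finalGraph d σ := by
  set n := numEdges d with hn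
  set L := ((List.finRange n).map fun j =>
    ((σ.symm j : ↥(cubeGraph d).edgeSet) : Sym2 (Vtx d))) with hL
  have hlen : L.length = n := by simp [hL]
  set i : ℕ := (σ e : ℕ) with hi
  have hiltn : i < n := (σ e).2
  have hiltL : i < L.length := by omega
  have hLget : ∀ (k : ℕ) (hk : k < L.length),
      L[k] = ((σ.symm ⟨k, by omega⟩ : ↥(cubeGraph d).edgeSet) : Sym2 (Vtx d)) := by
    intro k hk
    simp [hL]
  -- the graph just before processing e
  set G : Finset (Sym2 (Vtx d)) := (L.take i).foldl (step d) ∅ with hG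
  have hGmem : ∀ x ∈ G, ∃ k : ℕ, ∃ hk : k < n, k < i ∧
      x = ((σ.symm ⟨k, hk⟩ : ↥(cubeGraph d).edgeSet) : Sym2 (Vtx d)) := by
    intro x hx
    rcases mem_foldl d _ _ _ hx with h | h
    · simp at h
    · obtain ⟨k, hk, hkx⟩ := List.getElem_of_mem h
      have hk' : k < i := by
        have := hk; simp [List.length_take, hlen] at this; omega
      have hkL : k < L.length := by omega
      refine ⟨k, by omega, hk', ?_⟩
      rw [← hkx, List.getElem_take]
      exact (hLget k hkL).symm ▸ rfl
  -- split the fold at position i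
  have hsplit : L = L.take i ++ L[i] :: L.drop (i + 1) := by
    conv_lhs => rw [← List.take_append_drop i L]
    rw [List.drop_eq_getElem_cons hiltL]
  have hLi : L[i] = (e : Sym2 (Vtx d)) := by
    rw [hLget i hiltL]
    simp [hi]
  -- the step at e adds e
  have hstep : (e : Sym2 (Vtx d)) ∈ step d G (e : Sym2 (Vtx d)) := by
    unfold step
    split
    · next h =>
      exfalso
      obtain ⟨C, hC, hCsub, hCnsub⟩ := h
      have heC : (e : Sym2 (Vtx d)) ∈ C := by
        by_contra heC
        exact hCnsub fun x hx => by
          rcases Finset.mem_insert.mp (hCsub hx) with h | h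
          · exact absurd (h ▸ hx) heC
          · exact h
      obtain ⟨f, hfC, hfe, hf, hlt⟩ := he C hC heC
      have hfG : f ∈ G := by
        rcases Finset.mem_insert.mp (hCsub hfC) with h | h
        · exact absurd h hfe
        · exact h
      obtain ⟨k, hk, hki, hkeq⟩ := hGmem f hfG
      have : σ ⟨f, hf⟩ = ⟨k, hk⟩ := by
        have : (⟨f, hf⟩ : ↥(cubeGraph d).edgeSet) = σ.symm ⟨k, hk⟩ :=
          Subtype.ext hkeq
        rw [this, Equiv.apply_symm_apply]
      rw [this] at hlt
      have : i < k := hlt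
      omega
    · exact Finset.mem_insert_self _ _
  -- conclude
  have hfin : finalGraph d σ = List.foldl (step d) ∅ L := by
    unfold finalGraph; rw [← hL]
  have h2 : List.foldl (step d) ∅ L
      = (L[i] :: L.drop (i + 1)).foldl (step d) G := by
    conv_lhs => rw [hsplit]
    rw [List.foldl_append]
  rw [hfin, h2, hLi]
  simp only [List.foldl_cons]
  exact subset_foldl d _ _ hstep
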